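/- Let G be a finite group, H ≤ G, and suppose the sets X₁,…,Xₙ are H-sets. For λ : G/H → [n] with stabilizer G_λ and double coset representatives g₁,…,g_r for G_λ\G/H, there is a G_λ-equivariant bijection F_λ(X₁,…,Xₙ) ≅ ∏_{i=1}^r Coind_{H_{g_i}}^{G_λ} Res_{H_{g_i}}^H X_{λ(g_i H)}, where H_g = G_λ ∩ gHg⁻¹ acts on X via h·x = (g⁻¹hg)·x. -/

import Mathlib

variable {G : Type} [Group G]

/-- The action of `G` on functions `G ⧸ H → Fin n` by `(g • l) x = l (g⁻¹ • x)`. -/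
instance arrowMulAction (H : Subgroup G) (n : ℕ) : MulAction G ((G ⧸ H) → Fin n) where
  smul g l := fun x => l (g⁻¹ • x)
  one_smul l := by funext x; show l ((1:G)⁻¹ • x) = l x; simp
  mul_smul a b l := by
    funext x
    show l ((a * b)⁻¹ • x) = l (b⁻¹ • a⁻¹ • x)
    rw [mul_inv_rev, mul_smul]

/-- The stabilizer `G_λ` of `λ : G ⧸ H → Fin n`. -/
def stab (H : Subgroup G) {n : ℕ} (l : G ⧸ H → Fin n) : Subgroup G where
  carrier := {g | ∀ x, l (g⁻¹ • x) = l x}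
  one_mem' := by intro x; simp
  mul_mem' := by
    intro a b ha hb x
    simp only [Set.mem_setOf_eq] at *
    rw [mul_inv_rev, mul_smul, hb, ha]
  inv_mem' := by
    intro a ha x
    simp only [Set.mem_setOf_eq] at *
    have h := ha (a • x)
    rw [inv_smul_smul] at h
    rw [inv_inv]
    exact h.symm

/-- Coinduction: `H`-equivariant maps `G → X`, a `G`-set. -/
def Coind (H : Subgroup G) (X : Type) [MulAction H X] : Type :=
  {f : G → X // ∀ (g : G) (h : H), f (g * h) = h⁻¹ • f g}

instance Coind.mulAction (H : Subgroup G) (X : Type) [MulAction H X] :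
    MulAction G (Coind H X) where
  smul g f := ⟨fun g' => f.1 (g⁻¹ * g'), by
    intro g' h
    show f.1 (g⁻¹ * (g' * h)) = h⁻¹ • f.1 (g⁻¹ * g')
    rw [← mul_assoc]
    exact f.2 (g⁻¹ * g') h⟩
  one_smul f := Subtype.ext (funext fun g' => by show f.1 ((1:G)⁻¹ * g') = f.1 g'; simp)
  mul_smul a b f := Subtype.ext (funext fun g' => by
    show f.1 ((a * b)⁻¹ * g') = f.1 (b⁻¹ * (a⁻¹ * g'))
    rw [mul_inv_rev, mul_assoc])

instance sigmaMulAction (H : Subgroup G) {n : ℕ} (X : Fin n → Type)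
    [∀ i, MulAction H (X i)] : MulAction H (Σ i, X i) where
  smul h p := ⟨p.1, h • p.2⟩
  one_smul p := by cases p with | mk i x => show (⟨i, (1:H) • x⟩ : Σ i, X i) = ⟨i, x⟩; rw [one_smul]
  mul_smul a b p := by
    cases p with | mk i x =>
      show (⟨i, (a * b) • x⟩ : Σ i, X i) = ⟨i, a • b • x⟩
      rw [mul_smul]

/-- The map recording in which summand an element of `Coind_H^G (X₁ ⊔ ⋯ ⊔ Xₙ)` takes its values. -/
def component (H : Subgroup G) {n : ℕ} (X : Fin n → Type) [∀ i, MulAction H (X i)]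
    (f : Coind H (Σ i, X i)) : G ⧸ H → Fin n :=
  Quotient.lift (fun g => (f.1 g).1) (by
    intro a b hab
    have hmem : a⁻¹ * b ∈ H := QuotientGroup.leftRel_apply.mp hab
    show (f.1 a).1 = (f.1 b).1
    have hb : f.1 b = f.1 (a * ((⟨a⁻¹ * b, hmem⟩ : H) : G)) := by
      simp [mul_inv_cancel_left]
    rw [hb, f.2 a ⟨a⁻¹ * b, hmem⟩]
    rfl)

/-- `F_λ`: the fiber of the component map over `λ`. -/
def Flambda (H : Subgroup G) {n : ℕ} (X : Fin n → Type) [∀ i, MulAction H (X i)]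
    (l : G ⧸ H → Fin n) : Type :=
  {f : Coind H (Σ i, X i) // component H X f = l}

theorem component_smul (H : Subgroup G) {n : ℕ} (X : Fin n → Type) [∀ i, MulAction H (X i)]
    (g : G) (f : Coind H (Σ i, X i)) :
    component H X (g • f) = g • component H X f := by
  funext x
  induction x using QuotientGroup.induction_on with
  | H g' => rfl

/-- `F_λ` is a `G_λ`-set. -/
instance Flambda.mulAction (H : Subgroup G) {n : ℕ} (X : Fin n → Type)
    [∀ i, MulAction H (X i)] (l : G ⧸ H → Fin n) :
    MulAction (stab H l) (Flambda H X l) where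
  smul k f := ⟨(k : G) • f.1, by
    rw [component_smul, f.2]
    funext x
    exact k.2 x⟩
  one_smul f := Subtype.ext (by
    show ((1 : stab H l) : G) • f.1 = f.1
    rw [Subgroup.coe_one, one_smul])
  mul_smul a b f := Subtype.ext (by
    show ((a * b : stab H l) : G) • f.1 = (a : G) • (b : G) • f.1
    rw [Subgroup.coe_mul, mul_smul])

/-- The conjugate subgroup `g H g⁻¹`. -/
def conjSub (H : Subgroup G) (g : G) : Subgroup G where
  carrier := {x | g⁻¹ * x * g ∈ H}
  one_mem' := by simpa using H.one_mem
  mul_mem' := by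
    intro a b ha hb
    simp only [Set.mem_setOf_eq] at *
    convert mul_mem ha hb using 1
    group
  inv_mem' := by
    intro a ha
    simp only [Set.mem_setOf_eq] at *
    convert inv_mem ha using 1
    group

/-- The action of `H_g = K ∩ gHg⁻¹` (as a subgroup of `K`) on an `H`-set `X`
via `h • x = (g⁻¹ h g) • x`. -/
def dcAction (H K : Subgroup G) (g : G) (X : Type) [MulAction H X] :
    MulAction ((K ⊓ conjSub H g).subgroupOf K) X where
  smul k x :=
    (⟨g⁻¹ * ((k : K) : G) * g, (Subgroup.mem_inf.mp (Subgroup.mem_subgroupOf.mp k.2)).2⟩ : H) • x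
  one_smul x := by
    show (⟨g⁻¹ * _ * g, _⟩ : H) • x = x
    have h1 : (⟨g⁻¹ * (((1 : (K ⊓ conjSub H g).subgroupOf K) : K) : G) * g,
        (Subgroup.mem_inf.mp (Subgroup.mem_subgroupOf.mp
          (1 : (K ⊓ conjSub H g).subgroupOf K).2)).2⟩ : H) = 1 := by
      ext
      simp
    rw [h1, one_smul]
  mul_smul a b x := by
    show (⟨g⁻¹ * _ * g, _⟩ : H) • x = (⟨g⁻¹ * _ * g, _⟩ : H) • ((⟨g⁻¹ * _ * g, _⟩ : H) • x)
    rw [← mul_smul]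
    congr 1
    ext
    show g⁻¹ * (((a * b : (K ⊓ conjSub H g).subgroupOf K) : K) : G) * g
      = (g⁻¹ * ((a : K) : G) * g) * (g⁻¹ * ((b : K) : G) * g)
    push_cast
    group


section MackeyAux

variable {H : Subgroup G} {n : ℕ} {X : Fin n → Type} [∀ i, MulAction H (X i)]
variable {l : G ⧸ H → Fin n}

/-- Extract the value of a sigma element in a known component. -/
def ext' (X : Fin n → Type) {j : Fin n} (p : Σ i, X i) (hp : p.1 = j) : X j := hp ▸ p.2

lemma ext'_congr {j : Fin n} {p q : Σ i, X i} (h : p = q) (hp : p.1 = j) (hq : q.1 = j) :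
    ext' X p hp = ext' X q hq := by subst h; rfl

lemma sigma_ext' {j : Fin n} (p : Σ i, X i) (hp : p.1 = j) :
    (⟨j, ext' X p hp⟩ : Σ i, X i) = p := by
  cases p with | mk i x => cases hp; rfl

lemma ext'_smul (h : H) {j : Fin n} (p : Σ i, X i) (hp : p.1 = j) (hp' : (h • p).1 = j) :
    ext' X (h • p) hp' = h • ext' X p hp := by
  cases p with | mk i x => cases hp; rfl

lemma comp_eq (f : Flambda H X l) (a : G) : (f.1.1 a).1 = l (QuotientGroup.mk a) :=
  congrFun f.2 (QuotientGroup.mk a)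

lemma stab_smul {k : G} (hk : k ∈ stab H l) (x : G ⧸ H) : l (k • x) = l x := by
  have := hk (k • x); rw [inv_smul_smul] at this; exact this.symm

lemma l_mul {k : G} (hk : k ∈ stab H l) (a : G) :
    l (QuotientGroup.mk (k * a)) = l (QuotientGroup.mk a) := by
  have h1 : QuotientGroup.mk (k * a) = k • (QuotientGroup.mk a : G ⧸ H) :=
    (MulAction.Quotient.smul_mk H k a).symm
  rw [h1, stab_smul hk]

lemma l_rep {i : G} {k h : G} (hk : k ∈ stab H l) (hh : h ∈ H) :
    l (QuotientGroup.mk (k * i * h)) = l (QuotientGroup.mk i) := by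
  rw [QuotientGroup.mk_mul_of_mem _ hh, l_mul hk]

lemma dcAction_smul (K : Subgroup G) (g0 : G) (Y : Type) [MulAction H Y]
    (k : (K ⊓ conjSub H g0).subgroupOf K) (x : Y) :
    letI := dcAction H K g0 Y
    k • x = (⟨g0⁻¹ * ((k : K) : G) * g0,
      (Subgroup.mem_inf.mp (Subgroup.mem_subgroupOf.mp k.2)).2⟩ : H) • x := rfl

end MackeyAux

section MackeyFwd

variable {H : Subgroup G} {n : ℕ} {X : Fin n → Type} [∀ i, MulAction H (X i)]
variable {l : G ⧸ H → Fin n} {r : ℕ}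

/-- The forward map of the Mackey decomposition. -/
def fwd (g : Fin r → G) (f : Flambda H X l) (i : Fin r) :
    @Coind (stab H l) _ ((stab H l ⊓ conjSub H (g i)).subgroupOf (stab H l))
      (X (l (QuotientGroup.mk (g i))))
      (dcAction H (stab H l) (g i) (X (l (QuotientGroup.mk (g i))))) :=
  ⟨fun c => ext' X (f.1.1 ((c : G) * g i)) (by rw [comp_eq, l_mul c.2]),
   by
    intro c h
    have hmem : (g i)⁻¹ * (((h : stab H l) : G)) * g i ∈ H :=
      (Subgroup.mem_inf.mp (Subgroup.mem_subgroupOf.mp h.2)).2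
    have key : f.1.1 (((c * h : stab H l) : G) * g i)
        = (⟨(g i)⁻¹ * (((h : stab H l) : G)) * g i, hmem⟩ : H)⁻¹ • f.1.1 ((c : G) * g i) := by
      have h2 : ((c * h : stab H l) : G) * g i
          = ((c : G) * g i) * ((⟨(g i)⁻¹ * (((h : stab H l) : G)) * g i, hmem⟩ : H) : G) := by
        push_cast
        group
      rw [h2]
      exact f.1.2 ((c : G) * g i) _
    have hp : (f.1.1 ((c : G) * g i)).1 = l (QuotientGroup.mk (g i)) := by
      rw [comp_eq, l_mul c.2]
    have hq : ((⟨(g i)⁻¹ * (((h : stab H l) : G)) * g i, hmem⟩ : H)⁻¹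
        • f.1.1 ((c : G) * g i)).1 = l (QuotientGroup.mk (g i)) := hp
    have hp' : (f.1.1 (((c * h : stab H l) : G) * g i)).1 = l (QuotientGroup.mk (g i)) := by
      rw [comp_eq, l_mul (c * h).2]
    rw [dcAction_smul]
    show ext' X (f.1.1 (((c * h : stab H l) : G) * g i)) hp' = _
    refine ((ext'_congr key hp' hq).trans (ext'_smul _ _ hp hq)).trans ?_
    congr 1
    ext
    push_cast
    group⟩

theorem fwd_equivariant (g : Fin r → G) (k : stab H l) (f : Flambda H X l) (i : Fin r)
    (c : stab H l) :
    ((fwd g (k • f)) i).1 c = ((fwd g f) i).1 (k⁻¹ * c) := by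
  show ext' X ((k • f).1.1 ((c : G) * g i)) _ = ext' X (f.1.1 (((k⁻¹ * c : stab H l) : G) * g i)) _
  exact ext'_congr (congrArg f.1.1 (by push_cast; group)) _ _

end MackeyFwd

section MackeyBwd

variable {H : Subgroup G} {n : ℕ} {X : Fin n → Type} [∀ i, MulAction H (X i)]
variable {l : G ⧸ H → Fin n} {r : ℕ}

lemma exists_rep {g : Fin r → G}
    (hg2 : Function.Surjective fun i : Fin r => DoubleCoset.mk (stab H l) H (g i)) (a : G) :
    ∃ p : Fin r × G × G, p.2.1 ∈ stab H l ∧ p.2.2 ∈ H ∧ a = p.2.1 * g p.1 * p.2.2 := by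
  obtain ⟨i, hi⟩ := hg2 (DoubleCoset.mk (stab H l) H a)
  obtain ⟨k, hk, h, hh, ha⟩ := (DoubleCoset.eq _ _ _ _).mp hi
  exact ⟨⟨i, k, h⟩, hk, hh, ha⟩

/-- A choice of double-coset representative data for each `a : G`. -/
noncomputable def repdata {g : Fin r → G}
    (hg2 : Function.Surjective fun i : Fin r => DoubleCoset.mk (stab H l) H (g i)) (a : G) :
    {p : Fin r × G × G // p.2.1 ∈ stab H l ∧ p.2.2 ∈ H ∧ a = p.2.1 * g p.1 * p.2.2} :=
  Classical.indefiniteDescription _ (exists_rep hg2 a)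

variable (g : Fin r → G)

/-- Abbreviation for the codomain of the decomposition. -/
def ProdCoind : Type :=
  ∀ i : Fin r, @Coind (stab H l) _
    ((stab H l ⊓ conjSub H (g i)).subgroupOf (stab H l))
    (X (l (QuotientGroup.mk (g i))))
    (dcAction H (stab H l) (g i) (X (l (QuotientGroup.mk (g i)))))

variable {g}

lemma indep (φ : ProdCoind (X := X) (l := l) g) (i : Fin r) {k k' h h' : G}
    (hk : k ∈ stab H l) (hk' : k' ∈ stab H l) (hh : h ∈ H) (hh' : h' ∈ H)
    (heq : k * g i * h = k' * g i * h') :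
    (⟨h, hh⟩ : H)⁻¹ • (φ i).1 ⟨k, hk⟩ = (⟨h', hh'⟩ : H)⁻¹ • (φ i).1 ⟨k', hk'⟩ := by
  have e1 : (g i)⁻¹ * (k'⁻¹ * k) * g i = h' * h⁻¹ := by
    have h2 := congrArg (fun x => (g i)⁻¹ * k'⁻¹ * x * h⁻¹) heq
    group at h2 ⊢
    rw [h2]
  have hu1 : k'⁻¹ * k ∈ stab H l := mul_mem (inv_mem hk') hk
  have hu2 : k'⁻¹ * k ∈ conjSub H (g i) := by
    show (g i)⁻¹ * (k'⁻¹ * k) * g i ∈ H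
    rw [e1]; exact mul_mem hh' (inv_mem hh)
  set u' : (stab H l ⊓ conjSub H (g i)).subgroupOf (stab H l) :=
    ⟨⟨k'⁻¹ * k, hu1⟩, Subgroup.mem_subgroupOf.mpr (Subgroup.mem_inf.mpr ⟨hu1, hu2⟩)⟩ with hu'
  have hck : (⟨k, hk⟩ : stab H l) = ⟨k', hk'⟩ * (u' : stab H l) := by
    ext; show k = k' * (k'⁻¹ * k); group
  have h3 := (φ i).2 ⟨k', hk'⟩ u'
  rw [dcAction_smul] at h3
  rw [hck, h3, smul_smul]
  congr 1
  ext
  show h⁻¹ * ((g i)⁻¹ * (((u'⁻¹ : _) : stab H l) : G) * g i) = h'⁻¹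
  have e2 : (((u'⁻¹ : _) : stab H l) : G) = (k'⁻¹ * k)⁻¹ := rfl
  rw [e2]
  have e3 : (g i)⁻¹ * (k'⁻¹ * k)⁻¹ * g i = (h' * h⁻¹)⁻¹ := by
    rw [← e1]; group
  have e4 : (g i)⁻¹ * (k'⁻¹ * k)⁻¹ * g i = ((g i)⁻¹ * (k'⁻¹ * k)⁻¹) * g i := by group
  rw [show (g i)⁻¹ * (k'⁻¹ * k)⁻¹ * g i = (g i)⁻¹ * (k'⁻¹ * k)⁻¹ * g i from rfl]
  calc h⁻¹ * ((g i)⁻¹ * (k'⁻¹ * k)⁻¹ * g i) = h⁻¹ * (h' * h⁻¹)⁻¹ := by rw [e3]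
    _ = h'⁻¹ := by group

end MackeyBwd

section MackeyBwd2

variable {H : Subgroup G} {n : ℕ} {X : Fin n → Type} [∀ i, MulAction H (X i)]
variable {l : G ⧸ H → Fin n} {r : ℕ} {g : Fin r → G}

/-- The underlying function of the inverse map. -/
noncomputable def bwdVal (φ : ProdCoind (X := X) (l := l) g)
    (hg2 : Function.Surjective fun i : Fin r => DoubleCoset.mk (stab H l) H (g i)) (a : G) :
    Σ j, X j :=
  ⟨l (QuotientGroup.mk (g (repdata hg2 a).1.1)),
    (⟨(repdata hg2 a).1.2.2, (repdata hg2 a).2.2.1⟩ : H)⁻¹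
      • (φ (repdata hg2 a).1.1).1 ⟨(repdata hg2 a).1.2.1, (repdata hg2 a).2.1⟩⟩

lemma pair_eq (φ : ProdCoind (X := X) (l := l) g) {i i' : Fin r} (hii : i = i')
    {k k' h h' : G} (hk : k ∈ stab H l) (hk' : k' ∈ stab H l) (hh : h ∈ H) (hh' : h' ∈ H)
    (heq : k * g i * h = k' * g i' * h') :
    (⟨l (QuotientGroup.mk (g i)), (⟨h, hh⟩ : H)⁻¹ • (φ i).1 ⟨k, hk⟩⟩ : Σ j, X j)
      = ⟨l (QuotientGroup.mk (g i')), (⟨h', hh'⟩ : H)⁻¹ • (φ i').1 ⟨k', hk'⟩⟩ := by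
  subst hii
  exact congrArg (Sigma.mk _) (indep φ i hk hk' hh hh' heq)

lemma bwdVal_eq (hg : Function.Bijective fun i : Fin r => DoubleCoset.mk (stab H l) H (g i))
    (φ : ProdCoind (X := X) (l := l) g) (a : G) (i : Fin r) {k h : G}
    (hk : k ∈ stab H l) (hh : h ∈ H) (ha : a = k * g i * h) :
    bwdVal φ hg.2 a
      = ⟨l (QuotientGroup.mk (g i)), (⟨h, hh⟩ : H)⁻¹ • (φ i).1 ⟨k, hk⟩⟩ := by
  obtain ⟨hk₀, hh₀, ha₀⟩ := (repdata hg.2 a).2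
  have hi : (repdata hg.2 a).1.1 = i := by
    apply hg.1
    show DoubleCoset.mk (stab H l) H (g (repdata hg.2 a).1.1) = DoubleCoset.mk (stab H l) H (g i)
    calc DoubleCoset.mk (stab H l) H (g (repdata hg.2 a).1.1)
        = DoubleCoset.mk (stab H l) H a := (DoubleCoset.eq _ _ _ _).mpr ⟨_, hk₀, _, hh₀, ha₀⟩
      _ = DoubleCoset.mk (stab H l) H (g i) := ((DoubleCoset.eq _ _ _ _).mpr ⟨k, hk, h, hh, ha⟩).symm
  exact pair_eq φ hi hk₀ hk hh₀ hh (by rw [← ha₀, ha])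

/-- The inverse map of the Mackey decomposition. -/
noncomputable def bwd (hg : Function.Bijective fun i : Fin r => DoubleCoset.mk (stab H l) H (g i))
    (φ : ProdCoind (X := X) (l := l) g) : Flambda H X l := by
  refine ⟨⟨fun a => bwdVal φ hg.2 a, ?_⟩, ?_⟩
  · intro a h0
    obtain ⟨hk, hh, ha⟩ := (repdata hg.2 a).2
    set i := (repdata hg.2 a).1.1
    set k := (repdata hg.2 a).1.2.1
    set h := (repdata hg.2 a).1.2.2
    have ha' : a * (h0 : G) = k * g i * (h * h0) := by rw [ha]; group
    have e1 := bwdVal_eq hg φ (a * (h0 : G)) i hk (mul_mem hh h0.2) ha'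
    have e2 := bwdVal_eq hg φ a i hk hh ha
    show bwdVal φ hg.2 (a * (h0 : G)) = h0⁻¹ • bwdVal φ hg.2 a
    rw [e1, e2]
    show _ = h0⁻¹ • (⟨l (QuotientGroup.mk (g i)), (⟨h, hh⟩ : H)⁻¹ • (φ i).1 ⟨k, hk⟩⟩ : Σ j, X j)
    show (⟨l (QuotientGroup.mk (g i)), (⟨h * (h0 : G), mul_mem hh h0.2⟩ : H)⁻¹ • (φ i).1 ⟨k, hk⟩⟩ : Σ j, X j)
      = ⟨l (QuotientGroup.mk (g i)), h0⁻¹ • ((⟨h, hh⟩ : H)⁻¹ • (φ i).1 ⟨k, hk⟩)⟩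
    refine congrArg (Sigma.mk _) ?_
    rw [smul_smul]
    congr 1
    ext
    push_cast
    group
  · funext x
    induction x using QuotientGroup.induction_on with
    | H a =>
      obtain ⟨hk, hh, ha⟩ := (repdata hg.2 a).2
      show l (QuotientGroup.mk (g (repdata hg.2 a).1.1)) = l (QuotientGroup.mk a)
      conv_rhs => rw [ha]
      rw [l_rep hk hh]

lemma fwd_bwd (hg : Function.Bijective fun i : Fin r => DoubleCoset.mk (stab H l) H (g i))
    (φ : ProdCoind (X := X) (l := l) g) : fwd g (bwd hg φ) = φ := by
  funext i
  apply Subtype.ext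
  funext c
  have e1 : bwdVal φ hg.2 ((c : G) * g i)
      = ⟨l (QuotientGroup.mk (g i)), (⟨1, H.one_mem⟩ : H)⁻¹ • (φ i).1 ⟨(c : G), c.2⟩⟩ :=
    bwdVal_eq hg φ _ i c.2 H.one_mem (mul_one _).symm
  have e2 : (⟨l (QuotientGroup.mk (g i)), (⟨1, H.one_mem⟩ : H)⁻¹ • (φ i).1 ⟨(c : G), c.2⟩⟩ : Σ j, X j)
      = ⟨l (QuotientGroup.mk (g i)), (φ i).1 c⟩ := by
    refine congrArg (Sigma.mk _) ?_
    have : (⟨1, H.one_mem⟩ : H) = 1 := rfl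
    rw [this, inv_one, one_smul]
  show ext' X (bwdVal φ hg.2 ((c : G) * g i)) _ = (φ i).1 c
  refine (ext'_congr (e1.trans e2) _ rfl).trans rfl

lemma bwd_fwd (hg : Function.Bijective fun i : Fin r => DoubleCoset.mk (stab H l) H (g i))
    (f : Flambda H X l) : bwd hg (fwd g f) = f := by
  apply Subtype.ext
  apply Subtype.ext
  funext a
  show bwdVal (fwd g f) hg.2 a = f.1.1 a
  obtain ⟨hk, hh, ha⟩ := (repdata hg.2 a).2
  set i := (repdata hg.2 a).1.1
  set k := (repdata hg.2 a).1.2.1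
  set h := (repdata hg.2 a).1.2.2
  rw [bwdVal_eq hg (fwd g f) a i hk hh ha]
  have hp : (f.1.1 (k * g i)).1 = l (QuotientGroup.mk (g i)) := by
    rw [comp_eq, l_mul hk]
  have key : (fwd g f i).1 ⟨k, hk⟩ = ext' X (f.1.1 (k * g i)) hp := rfl
  rw [key]
  have hsm : (⟨h, hh⟩ : H)⁻¹ • f.1.1 (k * g i) = f.1.1 a := by
    refine (f.1.2 (k * g i) ⟨h, hh⟩).symm.trans ?_
    exact congrArg f.1.1 ha.symm
  have hq : ((⟨h, hh⟩ : H)⁻¹ • f.1.1 (k * g i)).1 = l (QuotientGroup.mk (g i)) := hp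
  calc (⟨l (QuotientGroup.mk (g i)), (⟨h, hh⟩ : H)⁻¹ • ext' X (f.1.1 (k * g i)) hp⟩ : Σ j, X j)
      = ⟨l (QuotientGroup.mk (g i)), ext' X ((⟨h, hh⟩ : H)⁻¹ • f.1.1 (k * g i)) hq⟩ :=
        congrArg (Sigma.mk _) (ext'_smul _ _ hp hq).symm
    _ = ⟨l (QuotientGroup.mk (g i)), ext' X (f.1.1 a) (by rw [← hsm]; exact hq)⟩ :=
        congrArg (Sigma.mk _) (ext'_congr hsm hq _)
    _ = f.1.1 a := sigma_ext' _ _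

end MackeyBwd2

/-- Mackey-type decomposition of `F_λ`: for double coset representatives
`g₁, …, g_r` of `G_λ \ G / H`, there is a `G_λ`-equivariant bijection
`F_λ(X₁,…,Xₙ) ≅ ∏ᵢ Coind_{H_{gᵢ}}^{G_λ} Res X_{λ(gᵢH)}` where
`H_g = G_λ ∩ gHg⁻¹` acts on `X` via `h • x = (g⁻¹hg) • x`. -/
theorem stmt_16 [Finite G] (H : Subgroup G) (n : ℕ) (X : Fin n → Type)
    [∀ i, MulAction H (X i)] (l : G ⧸ H → Fin n) (r : ℕ) (g : Fin r → G)
    (hg : Function.Bijective fun i : Fin r => DoubleCoset.mk (stab H l) H (g i)) :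
    ∃ e : Flambda H X l ≃
        (∀ i : Fin r, @Coind (stab H l) _
          (((stab H l) ⊓ conjSub H (g i)).subgroupOf (stab H l))
          (X (l (QuotientGroup.mk (g i))))
          (dcAction H (stab H l) (g i) (X (l (QuotientGroup.mk (g i)))))),
      ∀ (k : stab H l) (f : Flambda H X l) (i : Fin r) (c : stab H l),
        ((e (k • f)) i).1 c = ((e f) i).1 (k⁻¹ * c) := by
  refine ⟨⟨fun f i => fwd g f i, fun φ => bwd hg φ,
    fun f => bwd_fwd hg f, fun φ => fwd_bwd hg φ⟩, ?_⟩
  intro k f i c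
  exact fwd_equivariant g k f i c
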